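/- Let X = (X_1,…,X_d) be a random vector on a probability space and let X̂ = (X̂_1,…,X̂_d) be a random vector whose components are mutually independent with X̂_i equal in distribution to X_i for each i. If E f(X̂) ≤ E f(X) for every bounded measurable supermodular function f : ℝ^d → ℝ, then X is positive upper orthant dependent: for all t_1,…,t_d ∈ ℝ, P(X_1 > t_1, …, X_d > t_d) ≥ ∏_{i=1}^d P(X_i > t_i). -/

import Mathlib

open MeasureTheory ProbabilityTheory

/-- If `X̂` has mutually independent components with `X̂ᵢ =ᵈ Xᵢ` and
`E f(X̂) ≤ E f(X)` for every bounded measurable supermodular `f : ℝ^d → ℝ`, then `X` is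
positive upper orthant dependent. -/
theorem PSD_implies_PUOD
    {Ω : Type*} [MeasurableSpace Ω] (P : Measure Ω) [IsProbabilityMeasure P]
    {Ω' : Type*} [MeasurableSpace Ω'] (P' : Measure Ω') [IsProbabilityMeasure P']
    (d : ℕ) (X : Fin d → Ω → ℝ) (hX : ∀ i, Measurable (X i))
    (Xhat : Fin d → Ω' → ℝ) (hXhat : ∀ i, Measurable (Xhat i))
    (hindep : iIndepFun Xhat P')
    (hid : ∀ i, IdentDistrib (Xhat i) (X i) P' P)
    (PSD : ∀ f : (Fin d → ℝ) → ℝ, Measurable f → (∃ C, ∀ x, |f x| ≤ C) →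
      (∀ x y, f x + f y ≤ f (x ⊓ y) + f (x ⊔ y)) →
      (∫ ω, f (fun i => Xhat i ω) ∂P') ≤ ∫ ω, f (fun i => X i ω) ∂P) :
    ∀ t : Fin d → ℝ, ∏ i, P {ω | t i < X i ω} ≤ P {ω | ∀ i, t i < X i ω} := by
  intro t
  set S : Set (Fin d → ℝ) := {x | ∀ i, t i < x i} with hS
  have hSmeas : MeasurableSet S := by
    have : S = ⋂ i, (fun x : Fin d → ℝ => x i) ⁻¹' Set.Ioi (t i) := by
      ext x; simp [hS]
    rw [this]
    exact MeasurableSet.iInter fun i => (measurable_pi_apply i) measurableSet_Ioi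
  set f : (Fin d → ℝ) → ℝ := S.indicator (fun _ => 1) with hf
  have hfmeas : Measurable f := measurable_const.indicator hSmeas
  have hfbdd : ∃ C, ∀ x, |f x| ≤ C := by
    refine ⟨1, fun x => ?_⟩
    by_cases hx : x ∈ S <;> simp [hf, Set.indicator_apply, hx]
  have hfsup : ∀ x y, f x + f y ≤ f (x ⊓ y) + f (x ⊔ y) := by
    intro x y
    have hsupl : x ∈ S → x ⊔ y ∈ S := fun hx i =>
      lt_of_lt_of_le (hx i) (le_sup_left : x i ≤ x i ⊔ y i)
    have hsupr : y ∈ S → x ⊔ y ∈ S := fun hy i =>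
      lt_of_lt_of_le (hy i) (le_sup_right : y i ≤ x i ⊔ y i)
    have hinf : x ∈ S → y ∈ S → x ⊓ y ∈ S := fun hx hy i =>
      lt_inf_iff.mpr ⟨hx i, hy i⟩
    by_cases hx : x ∈ S <;> by_cases hy : y ∈ S <;>
      simp only [hf, Set.indicator_apply, hx, hy, hsupl, hsupr, hinf] <;>
      split_ifs <;> norm_num <;> contradiction
  have key := PSD f hfmeas hfbdd hfsup
  have hcompX : (fun ω => f (fun i => X i ω)) =
      ((fun ω => (fun i => X i ω)) ⁻¹' S).indicator (fun _ => (1:ℝ)) := by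
    ext ω
    by_cases h : (fun i => X i ω) ∈ S <;> simp [hf, Set.indicator_apply, h]
  have hcompXhat : (fun ω => f (fun i => Xhat i ω)) =
      ((fun ω => (fun i => Xhat i ω)) ⁻¹' S).indicator (fun _ => (1:ℝ)) := by
    ext ω
    by_cases h : (fun i => Xhat i ω) ∈ S <;> simp [hf, Set.indicator_apply, h]
  have hXmeas : Measurable (fun ω => (fun i => X i ω)) := measurable_pi_iff.mpr hX
  have hXhatmeas : Measurable (fun ω => (fun i => Xhat i ω)) := measurable_pi_iff.mpr hXhat
  rw [hcompX, hcompXhat, integral_indicator_const _ (hXmeas hSmeas),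
    integral_indicator_const _ (hXhatmeas hSmeas)] at key
  simp only [smul_eq_mul, mul_one] at key
  -- identify the sets
  have hsetX : (fun ω => (fun i => X i ω)) ⁻¹' S = {ω | ∀ i, t i < X i ω} := rfl
  have hsetXhat : (fun ω => (fun i => Xhat i ω)) ⁻¹' S = ⋂ i, Xhat i ⁻¹' Set.Ioi (t i) := by
    ext ω; simp [hS]
  rw [hsetX, hsetXhat] at key
  have hprod : P' (⋂ i, Xhat i ⁻¹' Set.Ioi (t i)) = ∏ i, P' (Xhat i ⁻¹' Set.Ioi (t i)) := by
    have := hindep.measure_inter_preimage_eq_mul Finset.univ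
      (sets := fun i => Set.Ioi (t i)) (fun i _ => measurableSet_Ioi)
    simpa using this
  have hid' : ∀ i, P' (Xhat i ⁻¹' Set.Ioi (t i)) = P {ω | t i < X i ω} := by
    intro i
    have := (hid i).measure_mem_eq (measurableSet_Ioi (a := t i))
    simpa [Set.preimage, Set.Ioi] using this
  simp only [measureReal_def] at key
  rw [hprod] at key
  simp only [hid'] at key
  -- convert toReal inequality back to ENNReal
  have hfin : ∀ i : Fin d, P {ω | t i < X i ω} ≠ ⊤ := fun i => measure_ne_top P _
  exact (ENNReal.toReal_le_toReal (ENNReal.prod_ne_top fun i _ => hfin i)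
    (measure_ne_top P _)).mp key
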